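/- arXiv:2404.04424 — 3 statements merged into one kernel-verified Lean document; each statement's English description precedes it below -/
import Mathlib

section
/- Let u : {0,1} × 𝒴 → ℝ be nontrivial, witnessed by y₀, y₁ ∈ 𝒴 with u(1,y₁) > u(0,y₁) and u(1,y₀) < u(0,y₀). Let φ : ℝ → ℝ be strictly increasing and concave. Then there exists δ̄ < 1 such that for all δ ∈ (δ̄, 1), the function W(q₀,q₁) = (1/2)·φ((1-q₁)δ·u(0,y₁) + q₁(1-δ)·u(1,y₀) + q₁δ·u(1,y₁) + (1-q₁)(1-δ)·u(0,y₀)) + (1/2)·φ((1-q₀)(1-δ)·u(0,y₁) + q₀δ·u(1,y₀) + q₀(1-δ)·u(1,y₁) + (1-q₀)δ·u(0,y₀)) over [0,1]² has unique maximizer (q₀,q₁) = (0,1). -/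
/-- For a nontrivial utility u (witnessed by y₀, y₁) and strictly increasing concave φ,
there is δ̄ < 1 such that for all δ ∈ (δ̄,1), the social welfare objective W over [0,1]²
has unique maximizer (q₀,q₁) = (0,1). -/
theorem stmt_6 {𝒴 : Type*} (y₀ y₁ : 𝒴) (u : Fin 2 → 𝒴 → ℝ)
    (hnt1 : u 1 y₁ > u 0 y₁) (hnt0 : u 1 y₀ < u 0 y₀)
    (φ : ℝ → ℝ) (hmono : StrictMono φ) (hconc : ConcaveOn ℝ Set.univ φ) :
    ∃ δbar : ℝ, δbar < 1 ∧ ∀ δ : ℝ, δbar < δ → δ < 1 →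
      ∀ q₀ q₁ : ℝ, q₀ ∈ Set.Icc (0:ℝ) 1 → q₁ ∈ Set.Icc (0:ℝ) 1 →
        (fun p₀ p₁ : ℝ =>
            (1/2) * φ ((1-p₁)*δ*u 0 y₁ + p₁*(1-δ)*u 1 y₀ + p₁*δ*u 1 y₁ + (1-p₁)*(1-δ)*u 0 y₀)
          + (1/2) * φ ((1-p₀)*(1-δ)*u 0 y₁ + p₀*δ*u 1 y₀ + p₀*(1-δ)*u 1 y₁ + (1-p₀)*δ*u 0 y₀))
          q₀ q₁ ≤
        (fun p₀ p₁ : ℝ =>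
            (1/2) * φ ((1-p₁)*δ*u 0 y₁ + p₁*(1-δ)*u 1 y₀ + p₁*δ*u 1 y₁ + (1-p₁)*(1-δ)*u 0 y₀)
          + (1/2) * φ ((1-p₀)*(1-δ)*u 0 y₁ + p₀*δ*u 1 y₀ + p₀*(1-δ)*u 1 y₁ + (1-p₀)*δ*u 0 y₀))
          0 1 ∧
        ((fun p₀ p₁ : ℝ =>
            (1/2) * φ ((1-p₁)*δ*u 0 y₁ + p₁*(1-δ)*u 1 y₀ + p₁*δ*u 1 y₁ + (1-p₁)*(1-δ)*u 0 y₀)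
          + (1/2) * φ ((1-p₀)*(1-δ)*u 0 y₁ + p₀*δ*u 1 y₀ + p₀*(1-δ)*u 1 y₁ + (1-p₀)*δ*u 0 y₀))
          q₀ q₁ =
        (fun p₀ p₁ : ℝ =>
            (1/2) * φ ((1-p₁)*δ*u 0 y₁ + p₁*(1-δ)*u 1 y₀ + p₁*δ*u 1 y₁ + (1-p₁)*(1-δ)*u 0 y₀)
          + (1/2) * φ ((1-p₀)*(1-δ)*u 0 y₁ + p₀*δ*u 1 y₀ + p₀*(1-δ)*u 1 y₁ + (1-p₀)*δ*u 0 y₀))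
          0 1 → q₀ = 0 ∧ q₁ = 1) := by
  have ha : (0:ℝ) < u 1 y₁ - u 0 y₁ := by linarith
  have hb : u 1 y₀ - u 0 y₀ < 0 := by linarith
  set a := u 1 y₁ - u 0 y₁ with ha'
  set b := u 1 y₀ - u 0 y₀ with hb'
  have hab : (0:ℝ) < a - b := by linarith
  refine ⟨max ((-b)/(a-b)) (a/(a-b)), ?_, ?_⟩
  · apply max_lt <;> rw [div_lt_one hab] <;> linarith
  intro δ hδ1 hδ2 q₀ q₁ hq₀ hq₁
  have hs1 : 0 < δ*a + (1-δ)*b := by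
    have h := lt_of_le_of_lt (le_max_left ((-b)/(a-b)) (a/(a-b))) hδ1
    rw [div_lt_iff₀ hab] at h; nlinarith
  have hs2 : (1-δ)*a + δ*b < 0 := by
    have h := lt_of_le_of_lt (le_max_right ((-b)/(a-b)) (a/(a-b))) hδ1
    rw [div_lt_iff₀ hab] at h; nlinarith
  simp only
  have hA : ∀ p : ℝ, (1-p)*δ*u 0 y₁ + p*(1-δ)*u 1 y₀ + p*δ*u 1 y₁ + (1-p)*(1-δ)*u 0 y₀
      = (δ*u 0 y₁ + (1-δ)*u 0 y₀) + p*(δ*a + (1-δ)*b) := by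
    intro p; rw [ha', hb']; ring
  have hB : ∀ p : ℝ, (1-p)*(1-δ)*u 0 y₁ + p*δ*u 1 y₀ + p*(1-δ)*u 1 y₁ + (1-p)*δ*u 0 y₀
      = ((1-δ)*u 0 y₁ + δ*u 0 y₀) + p*((1-δ)*a + δ*b) := by
    intro p; rw [ha', hb']; ring
  rw [hA q₁, hA 1, hB q₀, hB 0]
  have hAle : (δ*u 0 y₁ + (1-δ)*u 0 y₀) + q₁*(δ*a + (1-δ)*b)
      ≤ (δ*u 0 y₁ + (1-δ)*u 0 y₀) + 1*(δ*a + (1-δ)*b) := by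
    nlinarith [hq₁.2]
  have hBle : ((1-δ)*u 0 y₁ + δ*u 0 y₀) + q₀*((1-δ)*a + δ*b)
      ≤ ((1-δ)*u 0 y₁ + δ*u 0 y₀) + 0*((1-δ)*a + δ*b) := by
    nlinarith [hq₀.1]
  have hφA := hmono.monotone hAle
  have hφB := hmono.monotone hBle
  constructor
  · linarith
  · intro heq
    have e1 : φ ((δ*u 0 y₁ + (1-δ)*u 0 y₀) + q₁*(δ*a + (1-δ)*b))
        = φ ((δ*u 0 y₁ + (1-δ)*u 0 y₀) + 1*(δ*a + (1-δ)*b)) := by linarith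
    have e2 : φ (((1-δ)*u 0 y₁ + δ*u 0 y₀) + q₀*((1-δ)*a + δ*b))
        = φ (((1-δ)*u 0 y₁ + δ*u 0 y₀) + 0*((1-δ)*a + δ*b)) := by linarith
    have e1' := hmono.injective e1
    have e2' := hmono.injective e2
    constructor
    · have h0 : q₀*((1-δ)*a + δ*b) = 0 := by linarith
      have hne : (1-δ)*a + δ*b ≠ 0 := ne_of_lt hs2
      rcases mul_eq_zero.1 h0 with h | h
      · exact h
      · exact absurd h hne
    · have : q₁*(δ*a + (1-δ)*b) = 1*(δ*a + (1-δ)*b) := by linarith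
      have hne : (δ*a + (1-δ)*b) ≠ 0 := ne_of_gt hs1
      exact mul_right_cancel₀ hne this
end

section
/- Any constrained optimization choice rule is distinct from any social welfare choice rule: for every nontrivial utility u, strictly increasing concave φ, accuracy measure v, and fairness constraint chosen among Equalized Odds, Equality of False Negatives, Equality of False Positives, or Statistical Parity, there exists a population distribution μ on which the social-welfare-optimal algorithm fails the fairness constraint, hence cannot be chosen by the constrained optimization Designer. -/
/-- Joint distribution in the construction: groups G ∈ {0,1} equally likely, X = G,
μ(Y = y_j | G = j) = δ (all mass on {y₀,y₁}), and D = 1 with probability q_g given G = g: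
P(Y=y, G=g, D=d) = (1/2)·μ(Y=y|G=g)·(q_g if d=1 else 1-q_g). -/
noncomputable def joint7 {𝒴 : Type*} [DecidableEq 𝒴] (y₀ y₁ : 𝒴) (δ : ℝ)
    (q : Fin 2 → ℝ) (y : 𝒴) (g d : Fin 2) : ℝ :=
  (1/2) * (if (g = 1 ∧ y = y₁) ∨ (g = 0 ∧ y = y₀) then δ
           else if (g = 1 ∧ y = y₀) ∨ (g = 0 ∧ y = y₁) then 1 - δ else 0) *
    (if d = 1 then q g else 1 - q g)

/-- P(Y=y, G=g) under the construction. -/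
noncomputable def margYG7 {𝒴 : Type*} [DecidableEq 𝒴] (y₀ y₁ : 𝒴) (δ : ℝ)
    (q : Fin 2 → ℝ) (y : 𝒴) (g : Fin 2) : ℝ :=
  joint7 y₀ y₁ δ q y g 1 + joint7 y₀ y₁ δ q y g 0

/-- P(D=1 | Y=y, G=g) under the construction. -/
noncomputable def condD7 {𝒴 : Type*} [DecidableEq 𝒴] (y₀ y₁ : 𝒴) (δ : ℝ)
    (q : Fin 2 → ℝ) (y : 𝒴) (g : Fin 2) : ℝ :=
  joint7 y₀ y₁ δ q y g 1 / margYG7 y₀ y₁ δ q y g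

/-- The four fairness constraints: 0 = Equalized Odds, 1 = Equality of False Negatives
(conditioning on Y = y₁, the "needs treatment" type), 2 = Equality of False Positives
(conditioning on Y = y₀), 3 = Statistical Parity. -/
noncomputable def fair7 {𝒴 : Type*} [Fintype 𝒴] [DecidableEq 𝒴] (y₀ y₁ : 𝒴) (δ : ℝ)
    (q : Fin 2 → ℝ) (c : Fin 4) : Prop :=
  if c = 0 then
    ∀ y : 𝒴, 0 < margYG7 y₀ y₁ δ q y 0 → 0 < margYG7 y₀ y₁ δ q y 1 →
      condD7 y₀ y₁ δ q y 0 = condD7 y₀ y₁ δ q y 1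
  else if c = 1 then condD7 y₀ y₁ δ q y₁ 0 = condD7 y₀ y₁ δ q y₁ 1
  else if c = 2 then condD7 y₀ y₁ δ q y₀ 0 = condD7 y₀ y₁ δ q y₀ 1
  else (∑ y : 𝒴, joint7 y₀ y₁ δ q y 0 1) / (1/2) = (∑ y : 𝒴, joint7 y₀ y₁ δ q y 1 1) / (1/2)

/-- Social welfare objective Σ_g (1/2)·φ(E_{P_g}[u(D,Y)]) under the construction. -/
noncomputable def welfare7 {𝒴 : Type*} [Fintype 𝒴] [DecidableEq 𝒴] (y₀ y₁ : 𝒴)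
    (u : Fin 2 → 𝒴 → ℝ) (φ : ℝ → ℝ) (δ : ℝ) (q : Fin 2 → ℝ) : ℝ :=
  ∑ g : Fin 2, (1/2) * φ (∑ y : 𝒴, ∑ d : Fin 2, (joint7 y₀ y₁ δ q y g d / (1/2)) * u d y)

lemma sum_two_ite7 {𝒴 : Type*} [Fintype 𝒴] [DecidableEq 𝒴] (y₀ y₁ : 𝒴)
    (f : 𝒴 → ℝ) (A B : ℝ)
    (h : ∀ y, f y = (if y = y₁ then A else 0) + (if y = y₀ then B else 0)) :
    ∑ y : 𝒴, f y = A + B := by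
  simp only [h, Finset.sum_add_distrib, Finset.sum_ite_eq', Finset.mem_univ, if_true]

lemma welfare_closed7 {𝒴 : Type*} [Fintype 𝒴] [DecidableEq 𝒴] (y₀ y₁ : 𝒴) (hy : y₀ ≠ y₁)
    (u : Fin 2 → 𝒴 → ℝ) (φ : ℝ → ℝ) (δ : ℝ) (q : Fin 2 → ℝ) :
    welfare7 y₀ y₁ u φ δ q =
      (1/2) * φ ((1-δ) * ((1 - q 0) * u 0 y₁ + q 0 * u 1 y₁)
               + δ * ((1 - q 0) * u 0 y₀ + q 0 * u 1 y₀))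
    + (1/2) * φ (δ * ((1 - q 1) * u 0 y₁ + q 1 * u 1 y₁)
               + (1-δ) * ((1 - q 1) * u 0 y₀ + q 1 * u 1 y₀)) := by
  unfold welfare7
  rw [Fin.sum_univ_two]
  have h0 : (∑ y : 𝒴, ∑ d : Fin 2, (joint7 y₀ y₁ δ q y 0 d / (1/2)) * u d y)
      = (1-δ) * ((1 - q 0) * u 0 y₁ + q 0 * u 1 y₁)
        + δ * ((1 - q 0) * u 0 y₀ + q 0 * u 1 y₀) := by
    apply sum_two_ite7 y₀ y₁
    intro y
    rw [Fin.sum_univ_two]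
    by_cases h1 : y = y₁ <;> by_cases h2 : y = y₀
    · exact absurd (h2.symm.trans h1) hy
    · subst h1; simp [joint7, hy, Ne.symm hy, h2]; ring
    · subst h2; simp [joint7, hy, Ne.symm hy, h1]; ring
    · simp [joint7, h1, h2]
  have h1 : (∑ y : 𝒴, ∑ d : Fin 2, (joint7 y₀ y₁ δ q y 1 d / (1/2)) * u d y)
      = δ * ((1 - q 1) * u 0 y₁ + q 1 * u 1 y₁)
        + (1-δ) * ((1 - q 1) * u 0 y₀ + q 1 * u 1 y₀) := by
    apply sum_two_ite7 y₀ y₁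
    intro y
    rw [Fin.sum_univ_two]
    by_cases h1 : y = y₁ <;> by_cases h2 : y = y₀
    · exact absurd (h2.symm.trans h1) hy
    · subst h1; simp [joint7, hy, Ne.symm hy, h2]; ring
    · subst h2; simp [joint7, hy, Ne.symm hy, h1]; ring
    · simp [joint7, h1, h2]
  rw [h0, h1]

/-- Proposition 1: for every nontrivial utility u, strictly increasing concave φ, accuracy
measure v, and fairness constraint among Equalized Odds, Equality of False Negatives,
Equality of False Positives, and Statistical Parity, there is a population distribution
(indexed by δ ∈ (1/2,1)) such that every social-welfare-optimal algorithm violates the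
fairness constraint, hence cannot be chosen by the constrained optimization Designer. -/
theorem stmt_7 {𝒴 : Type*} [Fintype 𝒴] [DecidableEq 𝒴] (y₀ y₁ : 𝒴) (hy : y₀ ≠ y₁)
    (u : Fin 2 → 𝒴 → ℝ) (hnt1 : u 1 y₁ > u 0 y₁) (hnt0 : u 1 y₀ < u 0 y₀)
    (φ : ℝ → ℝ) (hmono : StrictMono φ) (hconc : ConcaveOn ℝ Set.univ φ)
    (v : Fin 2 → 𝒴 → ℝ) (c : Fin 4) :
    ∃ δ : ℝ, 1/2 < δ ∧ δ < 1 ∧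
      ∀ q : Fin 2 → ℝ, (∀ g, q g ∈ Set.Icc (0:ℝ) 1) →
        (∀ q' : Fin 2 → ℝ, (∀ g, q' g ∈ Set.Icc (0:ℝ) 1) →
          welfare7 y₀ y₁ u φ δ q' ≤ welfare7 y₀ y₁ u φ δ q) →
        ¬ fair7 y₀ y₁ δ q c := by
  obtain ⟨δ, hδhalf, hδ1, slope1, slope0⟩ : ∃ δ : ℝ, 1/2 < δ ∧ δ < 1 ∧
      0 < δ * (u 1 y₁ - u 0 y₁) - (1 - δ) * (u 0 y₀ - u 1 y₀) ∧
      (1 - δ) * (u 1 y₁ - u 0 y₁) - δ * (u 0 y₀ - u 1 y₀) < 0 := by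
    set a : ℝ := u 1 y₁ - u 0 y₁ with ha_def
    set b : ℝ := u 0 y₀ - u 1 y₀ with hb_def
    have ha : 0 < a := by simp [ha_def]; linarith
    have hb : 0 < b := by simp [hb_def]; linarith
    have hab : 0 < a + b := by linarith
    have hmax_lt : max a b < a + b := by
      rcases max_cases a b with ⟨h, _⟩ | ⟨h, _⟩ <;> rw [h] <;> linarith
    have hMpos : 0 < max a b := lt_of_lt_of_le ha (le_max_left a b)
    refine ⟨(max a b / (a + b) + 1) / 2, ?_, ?_, ?_, ?_⟩
    · have : 0 < max a b / (a + b) := div_pos hMpos hab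
      linarith
    · have : max a b / (a + b) < 1 := (div_lt_one hab).2 hmax_lt
      linarith
    · have key : (max a b / (a + b) + 1) / 2 * (a + b) = (max a b + (a + b)) / 2 := by
        field_simp
      have h1 : a ≤ max a b := le_max_left a b
      have h2 : b ≤ max a b := le_max_right a b
      nlinarith [key]
    · have key : (max a b / (a + b) + 1) / 2 * (a + b) = (max a b + (a + b)) / 2 := by
        field_simp
      have h1 : a ≤ max a b := le_max_left a b
      have h2 : b ≤ max a b := le_max_right a b
      nlinarith [key]
  refine ⟨δ, hδhalf, hδ1, ?_⟩
  intro q hq hopt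
  have hq1 : q 1 = 1 := by
    by_contra hne
    have hlt : q 1 < 1 := lt_of_le_of_ne (hq 1).2 hne
    set q' : Fin 2 → ℝ := fun g => if g = 1 then 1 else q g with hq'_def
    have hq'b : ∀ g, q' g ∈ Set.Icc (0:ℝ) 1 := by
      intro g; by_cases h : g = 1 <;> simp [hq'_def, h]
      · exact hq g
    have hle := hopt q' hq'b
    rw [welfare_closed7 y₀ y₁ hy, welfare_closed7 y₀ y₁ hy] at hle
    have e0 : q' 0 = q 0 := by simp [hq'_def]
    have e1 : q' 1 = 1 := by simp [hq'_def]
    rw [e0, e1] at hle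
    have key := (mul_le_mul_iff_right₀ (show (0:ℝ) < 1/2 by norm_num)).1
      ((add_le_add_iff_left _).1 hle)
    have hc := (hmono.le_iff_le).1 key
    nlinarith [hc, mul_pos (by linarith : (0:ℝ) < 1 - q 1) slope1]
  have hq0 : q 0 = 0 := by
    by_contra hne
    have hlt : 0 < q 0 := lt_of_le_of_ne (hq 0).1 (Ne.symm hne)
    set q' : Fin 2 → ℝ := fun g => if g = 0 then 0 else q g with hq'_def
    have hq'b : ∀ g, q' g ∈ Set.Icc (0:ℝ) 1 := by
      intro g; by_cases h : g = 0 <;> simp [hq'_def, h]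
      · exact hq g
    have hle := hopt q' hq'b
    rw [welfare_closed7 y₀ y₁ hy, welfare_closed7 y₀ y₁ hy] at hle
    have e0 : q' 0 = 0 := by simp [hq'_def]
    have e1 : q' 1 = q 1 := by simp [hq'_def]
    rw [e0, e1] at hle
    have key := (mul_le_mul_iff_right₀ (show (0:ℝ) < 1/2 by norm_num)).1
      ((add_le_add_iff_right _).1 hle)
    have hc := (hmono.le_iff_le).1 key
    nlinarith [hc, mul_pos hlt (by linarith :
      (0:ℝ) < δ * (u 0 y₀ - u 1 y₀) - (1 - δ) * (u 1 y₁ - u 0 y₁))]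
  have hδpos : (0:ℝ) < δ := by linarith
  have h1δ : (0:ℝ) < 1 - δ := by linarith
  have hc10 : condD7 y₀ y₁ δ q y₁ 0 = 0 := by
    unfold condD7 margYG7 joint7
    simp [Ne.symm hy, hq0]
  have hc11 : condD7 y₀ y₁ δ q y₁ 1 = 1 := by
    unfold condD7 margYG7 joint7
    simp [Ne.symm hy, hq1]
    intro h; linarith
  have hc00 : condD7 y₀ y₁ δ q y₀ 0 = 0 := by
    unfold condD7 margYG7 joint7
    simp [hy, hq0]
  have hc01 : condD7 y₀ y₁ δ q y₀ 1 = 1 := by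
    unfold condD7 margYG7 joint7
    simp [hy, hq1]
    intro h; linarith
  fin_cases c
  · intro hf
    rw [fair7] at hf
    simp only [if_pos rfl] at hf
    have hm0' : 0 < margYG7 y₀ y₁ δ q y₁ 0 := by
      unfold margYG7 joint7; simp [Ne.symm hy, hq0]; linarith
    have hm1' : 0 < margYG7 y₀ y₁ δ q y₁ 1 := by
      unfold margYG7 joint7; simp [Ne.symm hy, hq1]; linarith
    have := hf y₁ hm0' hm1'
    rw [hc10, hc11] at this
    norm_num at this
  · intro hf
    rw [fair7] at hf
    norm_num [Fin.ext_iff] at hf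
    rw [hc10, hc11] at hf
    norm_num at hf
  · intro hf
    rw [fair7] at hf
    norm_num [Fin.ext_iff] at hf
    rw [hc00, hc01] at hf
    norm_num at hf
  · intro hf
    rw [fair7] at hf
    norm_num [Fin.ext_iff] at hf
    have hs0 : (∑ y : 𝒴, joint7 y₀ y₁ δ q y 0 1) = 0 := by
      apply Finset.sum_eq_zero
      intro y _
      simp [joint7, hq0]
    have hs1 : (∑ y : 𝒴, joint7 y₀ y₁ δ q y 1 1) = 1/2 := by
      rw [sum_two_ite7 y₀ y₁ _ ((1/2) * δ) ((1/2) * (1-δ))]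
      · ring
      intro y
      by_cases h1 : y = y₁ <;> by_cases h2 : y = y₀
      · exact absurd (h2.symm.trans h1) hy
      · subst h1; simp [joint7, Ne.symm hy, h2, hq1]
      · subst h2; simp [joint7, hy, h1, hq1]
      · simp [joint7, h1, h2]
    rw [hs0, hs1] at hf
    norm_num at hf
end

section
/- In the two-group example, the welfare gap between the unconstrained social optimum and the best Equalized-Odds-constrained algorithm, namely φ(δ) − max_{q∈[0,1]} [(1/2)φ(qδ+(1-q)(1-δ)) + (1/2)φ((1-q)δ+q(1-δ))], is at least φ(δ) − φ(1/2) > 0 for every concave strictly increasing φ and δ ∈ (1/2,1). -/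
/-- The welfare gap between the unconstrained social optimum φ(δ) and the best
Equalized-Odds-constrained algorithm is at least φ(δ) − φ(1/2) > 0. -/
theorem stmt_13 (φ : ℝ → ℝ) (hconc : ConcaveOn ℝ Set.univ φ) (hmono : StrictMono φ)
    (δ : ℝ) (hδ : 1/2 < δ) (hδ1 : δ < 1) :
    φ δ - sSup ((fun q : ℝ => (1/2) * φ (q*δ + (1-q)*(1-δ)) + (1/2) * φ ((1-q)*δ + q*(1-δ)))
        '' Set.Icc (0:ℝ) 1) ≥ φ δ - φ (1/2) ∧
      0 < φ δ - φ (1/2) := by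
  have h2 : φ (1/2) < φ δ := hmono hδ
  have hsup : sSup ((fun q : ℝ => (1/2) * φ (q*δ + (1-q)*(1-δ)) + (1/2) * φ ((1-q)*δ + q*(1-δ)))
      '' Set.Icc (0:ℝ) 1) ≤ φ (1/2) := by
    apply csSup_le (Set.Nonempty.image _ ⟨0, by norm_num⟩)
    rintro x ⟨q, _, rfl⟩
    have h := hconc.2 (Set.mem_univ (q*δ + (1-q)*(1-δ))) (Set.mem_univ ((1-q)*δ + q*(1-δ)))
      (by norm_num : (0:ℝ) ≤ 1/2) (by norm_num : (0:ℝ) ≤ 1/2) (by norm_num)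
    have heq : (1/2 : ℝ) • (q*δ + (1-q)*(1-δ)) + (1/2 : ℝ) • ((1-q)*δ + q*(1-δ)) = 1/2 := by
      simp only [smul_eq_mul]; ring
    rw [heq] at h
    simpa using h
  exact ⟨by linarith, by linarith⟩
end
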